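/- Let G and H be connected weighted graphs on the same vertex set of size n, with Laplacians L_G and L_H, let ε ∈ (0,1), and suppose (1−ε)·L_G ⪯ L_H ⪯ (1+ε)·L_G. Then (n−1)/(1+ε) ≤ st_H(G) ≤ (n−1)/(1−ε), where st_H(G) = Tr(L_H⁺ L_G). Consequently, the rescaled graph H' with Laplacian L_{H'} = (1+ε)^{−1}·L_H satisfies n − 1 ≤ st_{H'}(G) ≤ (1+ε)/(1−ε) · (n−1). -/

import Mathlib

open Matrix

/-- The four Penrose conditions characterizing the Moore–Penrose pseudoinverse `P` of a real
matrix `A`. -/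
def IsMoorePenrose {ι : Type*} [Fintype ι] (A P : Matrix ι ι ℝ) : Prop :=
  A * P * A = A ∧ P * A * P = P ∧ (A * P)ᵀ = A * P ∧ (P * A)ᵀ = P * A

/-- The Laplacian of a connected weighted graph: symmetric, nonpositive off-diagonal entries,
zero row sums, and kernel spanned by the all-ones vector. -/
def IsConnLaplacian {ι : Type*} [Fintype ι] (M : Matrix ι ι ℝ) : Prop :=
  M.IsSymm ∧ (∀ i j, i ≠ j → M i j ≤ 0) ∧ (∀ i, ∑ j, M i j = 0) ∧
    ∀ x : ι → ℝ, M.mulVec x = 0 ↔ ∃ c : ℝ, x = fun _ => c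

lemma psd_diag_nonneg {m : Type*} [Fintype m] [DecidableEq m] {M : Matrix m m ℝ}
    (h : M.PosSemidef) (i : m) : 0 ≤ M i i := by
  have := h.dotProduct_mulVec_nonneg (Pi.single i 1)
  simpa [dotProduct, mulVec, Pi.single_apply, Finset.sum_ite_eq] using this

lemma psd_trace_nonneg {m : Type*} [Fintype m] [DecidableEq m] {M : Matrix m m ℝ}
    (h : M.PosSemidef) : 0 ≤ M.trace :=
  Finset.sum_nonneg fun i _ => psd_diag_nonneg h i

lemma psd_trace_mul_nonneg {m : Type*} [Fintype m] [DecidableEq m] {X Y : Matrix m m ℝ}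
    (hX : X.PosSemidef) (hY : Y.PosSemidef) : 0 ≤ (X * Y).trace := by
  obtain ⟨B, rfl⟩ : ∃ B : Matrix m m ℝ, X = star B * B := by
    open scoped MatrixOrder in exact CStarAlgebra.nonneg_iff_eq_star_mul_self.mp hX.nonneg
  rw [Matrix.mul_assoc, Matrix.trace_mul_comm]
  exact psd_trace_nonneg (hY.mul_mul_conjTranspose_same B)

lemma mp_unique {ι : Type*} [Fintype ι] {A P Q : Matrix ι ι ℝ}
    (hP : IsMoorePenrose A P) (hQ : IsMoorePenrose A Q) : P = Q := by
  obtain ⟨hP1, hP2, hP3, hP4⟩ := hP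
  obtain ⟨hQ1, hQ2, hQ3, hQ4⟩ := hQ
  have hAP : A * P = A * Q := by
    calc A * P = (A * P)ᵀ := hP3.symm
    _ = ((A * Q * A) * P)ᵀ := by rw [hQ1]
    _ = ((A * Q) * (A * P))ᵀ := by rw [Matrix.mul_assoc (A * Q)]
    _ = (A * P)ᵀ * (A * Q)ᵀ := by rw [transpose_mul]
    _ = (A * P) * (A * Q) := by rw [hP3, hQ3]
    _ = (A * P * A) * Q := by simp only [Matrix.mul_assoc]
    _ = A * Q := by rw [hP1]
  have hPA : P * A = Q * A := by
    have hQ1' : A * (Q * A) = A := by rw [← Matrix.mul_assoc, hQ1]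
    calc P * A = (P * A)ᵀ := hP4.symm
    _ = (P * (A * (Q * A)))ᵀ := by rw [hQ1']
    _ = ((P * A) * (Q * A))ᵀ := by rw [Matrix.mul_assoc]
    _ = (Q * A)ᵀ * (P * A)ᵀ := by rw [transpose_mul]
    _ = (Q * A) * (P * A) := by rw [hQ4, hP4]
    _ = Q * (A * P * A) := by simp only [Matrix.mul_assoc]
    _ = Q * A := by rw [hP1]
  calc P = P * A * P := hP2.symm
  _ = P * (A * Q) := by rw [Matrix.mul_assoc, hAP]
  _ = (Q * A) * Q := by rw [← Matrix.mul_assoc, hPA]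
  _ = Q := hQ2

lemma mp_transpose_self {ι : Type*} [Fintype ι] {A P : Matrix ι ι ℝ}
    (hA : Aᵀ = A) (hP : IsMoorePenrose A P) : Pᵀ = P := by
  obtain ⟨h1, h2, h3, h4⟩ := hP
  refine mp_unique ⟨?_, ?_, ?_, ?_⟩ ⟨h1, h2, h3, h4⟩
  · calc A * Pᵀ * A = (Aᵀ * P * Aᵀ)ᵀ := by simp [transpose_mul, Matrix.mul_assoc]
    _ = A := by rw [hA, h1, hA]
  · calc Pᵀ * A * Pᵀ = (P * Aᵀ * P)ᵀ := by simp [transpose_mul, Matrix.mul_assoc]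
    _ = Pᵀ := by rw [hA, h2]
  · have h : A * Pᵀ = (P * A)ᵀ := by rw [transpose_mul, hA]
    simp only [h, transpose_transpose, h4]
  · have h : Pᵀ * A = (A * P)ᵀ := by rw [transpose_mul, hA]
    simp only [h, transpose_transpose, h3]

lemma mp_smul {ι : Type*} [Fintype ι] {A P : Matrix ι ι ℝ} {c : ℝ} (hc : c ≠ 0)
    (hP : IsMoorePenrose A P) : IsMoorePenrose (c⁻¹ • A) (c • P) := by
  obtain ⟨h1, h2, h3, h4⟩ := hP
  refine ⟨?_, ?_, ?_, ?_⟩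
  · simp only [Matrix.smul_mul, Matrix.mul_smul, smul_smul, h1]
    congr 1
    field_simp
  · simp only [Matrix.smul_mul, Matrix.mul_smul, smul_smul, h2]
    congr 1
    field_simp
  · simp only [Matrix.smul_mul, Matrix.mul_smul, smul_smul, transpose_smul, h3]
  · simp only [Matrix.smul_mul, Matrix.mul_smul, smul_smul, transpose_smul, h4]

lemma psd_smul {m : Type*} [Fintype m] {M : Matrix m m ℝ} (h : M.PosSemidef)
    {c : ℝ} (hc : 0 ≤ c) : (c • M).PosSemidef := by
  refine posSemidef_iff_dotProduct_mulVec.mpr ⟨?_, ?_⟩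
  · have hsym := h.1
    ext i j
    simp only [conjTranspose_apply, Matrix.smul_apply, smul_eq_mul, star_mul', star_trivial]
    have hij : M j i = M i j := by
      conv_rhs => rw [← hsym]
      simp [conjTranspose_apply]
    rw [hij]
  · intro x
    rw [smul_mulVec, dotProduct_smul]
    exact mul_nonneg hc (h.dotProduct_mulVec_nonneg x)

lemma trace_mp_mul {n : ℕ} (hn : 0 < n) {A P : Matrix (Fin n) (Fin n) ℝ}
    (hker : ∀ x : Fin n → ℝ, A.mulVec x = 0 ↔ ∃ c : ℝ, x = fun _ => c)
    (hP : IsMoorePenrose A P) : (P * A).trace = (n : ℝ) - 1 := by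
  obtain ⟨h1, h2, h3, h4⟩ := hP
  set Q : Matrix (Fin n) (Fin n) ℝ := 1 - P * A with hQ
  have hAQ : A * Q = 0 := by
    rw [hQ, Matrix.mul_sub, Matrix.mul_one, ← Matrix.mul_assoc, h1, sub_self]
  have hQsym : Qᵀ = Q := by rw [hQ, transpose_sub, transpose_one, h4]
  -- each column of Q is constant
  have hcol : ∀ j i i', Q i j = Q i' j := by
    intro j i i'
    have hz : A.mulVec (fun k => Q k j) = 0 := by
      ext i''
      have : (A * Q) i'' j = 0 := by rw [hAQ]; rfl
      simpa [Matrix.mul_apply, Matrix.mulVec, dotProduct] using this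
    obtain ⟨c, hc⟩ := (hker _).mp hz
    rw [show Q i j = (fun k => Q k j) i from rfl, show Q i' j = (fun k => Q k j) i' from rfl, hc]
  have i0 : Fin n := ⟨0, hn⟩
  set c : ℝ := Q i0 i0 with hc
  have hconst : ∀ i j, Q i j = c := by
    intro i j
    calc Q i j = Q i0 j := hcol j i i0
    _ = Qᵀ j i0 := (Matrix.transpose_apply Q j i0).symm
    _ = Q j i0 := by rw [hQsym]
    _ = Q i0 i0 := hcol i0 j i0
  have hPAPA : (P * A) * (P * A) = P * A := by
    calc (P * A) * (P * A) = P * (A * P * A) := by simp only [Matrix.mul_assoc]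
    _ = P * A := by rw [h1]
  have hQQ : Q * Q = Q := by
    rw [hQ]
    simp only [Matrix.sub_mul, Matrix.mul_sub, Matrix.one_mul, Matrix.mul_one, hPAPA]
    abel
  -- entry equation : n c^2 = c
  have hent : (n : ℝ) * c ^ 2 = c := by
    have h' := congrArg (fun M => M i0 i0) hQQ
    simp only [Matrix.mul_apply] at h'
    calc (n : ℝ) * c ^ 2 = ∑ _j : Fin n, c * c := by
          rw [Finset.sum_const, Finset.card_univ, Fintype.card_fin, nsmul_eq_mul]; ring
    _ = ∑ j, Q i0 j * Q j i0 := Finset.sum_congr rfl fun j _ => by rw [hconst, hconst]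
    _ = Q i0 i0 := h'
    _ = c := hc.symm
  have hu : A.mulVec (fun _ => (1 : ℝ)) = 0 := (hker _).mpr ⟨1, rfl⟩
  have hcne : c ≠ 0 := by
    intro hc0
    have hQ0 : Q = 0 := by ext i j; rw [hconst i j, hc0]; rfl
    have hPA1 : P * A = 1 := by
      have := hQ0
      rw [hQ, sub_eq_zero] at this
      exact this.symm
    have : (fun _ => (1 : ℝ)) = ((1 : Matrix (Fin n) (Fin n) ℝ)).mulVec (fun _ => (1 : ℝ)) := by
      simp
    rw [← hPA1, ← Matrix.mulVec_mulVec, hu, Matrix.mulVec_zero] at this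
    exact one_ne_zero (congrFun this i0)
  have hcval : c = 1 / n := by
    have hn' : (n : ℝ) ≠ 0 := Nat.cast_ne_zero.mpr hn.ne'
    have h0 : c * ((n : ℝ) * c - 1) = 0 := by linear_combination hent
    rcases mul_eq_zero.mp h0 with h | h
    · exact absurd h hcne
    · rw [eq_div_iff hn', mul_comm]
      linarith
  have htrQ : Q.trace = 1 := by
    rw [Matrix.trace]
    simp only [Matrix.diag_apply]
    rw [Finset.sum_congr rfl (fun i _ => hconst i i), Finset.sum_const, Finset.card_univ,
      Fintype.card_fin, hcval]
    have hn' : (n : ℝ) ≠ 0 := Nat.cast_ne_zero.mpr hn.ne'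
    field_simp
    rw [nsmul_eq_mul, mul_one_div_cancel hn']
  have hfin : ((1 : Matrix (Fin n) (Fin n) ℝ) - P * A).trace = 1 := by rw [← hQ]; exact htrQ
  rw [trace_sub, trace_one] at hfin
  simp only [Fintype.card_fin] at hfin
  linarith

/-- if `(1-ε) L_G ⪯ L_H ⪯ (1+ε) L_G` then
`(n-1)/(1+ε) ≤ st_H(G) ≤ (n-1)/(1-ε)`, and the rescaled graph `H'` with
`L_{H'} = (1+ε)⁻¹ L_H` satisfies `n-1 ≤ st_{H'}(G) ≤ (1+ε)/(1-ε) (n-1)`. -/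
theorem sparsifier_stretch_bounds
    {n : ℕ} (hn : 0 < n) (LG LH PH PH' : Matrix (Fin n) (Fin n) ℝ)
    (hG : IsConnLaplacian LG) (hH : IsConnLaplacian LH)
    (ε : ℝ) (hε : ε ∈ Set.Ioo (0 : ℝ) 1)
    (h1 : (LH - (1 - ε) • LG).PosSemidef)
    (h2 : ((1 + ε) • LG - LH).PosSemidef)
    (hPH : IsMoorePenrose LH PH)
    (hPH' : IsMoorePenrose ((1 + ε)⁻¹ • LH) PH') :
    (((n : ℝ) - 1) / (1 + ε) ≤ (PH * LG).trace ∧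
      (PH * LG).trace ≤ ((n : ℝ) - 1) / (1 - ε)) ∧
    ((n : ℝ) - 1 ≤ (PH' * LG).trace ∧
      (PH' * LG).trace ≤ (1 + ε) / (1 - ε) * ((n : ℝ) - 1)) := by
  obtain ⟨hε0, hε1⟩ := hε
  have h1p : (0 : ℝ) < 1 + ε := by linarith
  have h1m : (0 : ℝ) < 1 - ε := by linarith
  have hLGpsd : LG.PosSemidef := by
    have hsum := h1.add h2
    have heq : (LH - (1 - ε) • LG) + ((1 + ε) • LG - LH) = (2 * ε) • LG := by module
    rw [heq] at hsum
    have := psd_smul hsum (c := (2 * ε)⁻¹) (by positivity)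
    rwa [smul_smul, inv_mul_cancel₀ (by positivity), one_smul] at this
  have hLHpsd : LH.PosSemidef := by
    have := h1.add (psd_smul hLGpsd (c := 1 - ε) h1m.le)
    rwa [sub_add_cancel] at this
  have hLHsym : LHᵀ = LH := hH.1
  have hPHsym : PHᵀ = PH := mp_transpose_self hLHsym hPH
  have hPHH : PHᴴ = PH := by
    have : PHᴴ = PHᵀ := by ext i j; simp [conjTranspose_apply]
    rw [this, hPHsym]
  have hPHpsd : PH.PosSemidef := by
    have := hLHpsd.mul_mul_conjTranspose_same PH
    rwa [hPHH, hPH.2.1] at this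
  have htr : (PH * LH).trace = (n : ℝ) - 1 := trace_mp_mul hn hH.2.2.2 hPH
  set t := (PH * LG).trace with ht
  have key1 : 0 ≤ (PH * ((1 + ε) • LG - LH)).trace := psd_trace_mul_nonneg hPHpsd h2
  have key2 : 0 ≤ (PH * (LH - (1 - ε) • LG)).trace := psd_trace_mul_nonneg hPHpsd h1
  have e1 : (PH * ((1 + ε) • LG - LH)).trace = (1 + ε) * t - ((n : ℝ) - 1) := by
    rw [Matrix.mul_sub, trace_sub, Matrix.mul_smul, trace_smul, htr, smul_eq_mul]
  have e2 : (PH * (LH - (1 - ε) • LG)).trace = ((n : ℝ) - 1) - (1 - ε) * t := by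
    rw [Matrix.mul_sub, trace_sub, Matrix.mul_smul, trace_smul, htr, smul_eq_mul]
  have lower : ((n : ℝ) - 1) / (1 + ε) ≤ t := by
    rw [div_le_iff₀ h1p]
    nlinarith [key1, e1]
  have upper : t ≤ ((n : ℝ) - 1) / (1 - ε) := by
    rw [le_div_iff₀ h1m]
    nlinarith [key2, e2]
  have hPH'eq : PH' = (1 + ε) • PH := mp_unique hPH' (mp_smul h1p.ne' hPH)
  have e3 : (PH' * LG).trace = (1 + ε) * t := by
    rw [hPH'eq, Matrix.smul_mul, trace_smul, smul_eq_mul]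
  refine ⟨⟨lower, upper⟩, ?_, ?_⟩
  · rw [e3]
    have := (div_le_iff₀ h1p).mp lower
    nlinarith
  · rw [e3]
    have h := mul_le_mul_of_nonneg_left upper h1p.le
    have hring : (1 + ε) * (((n : ℝ) - 1) / (1 - ε)) = (1 + ε) / (1 - ε) * ((n : ℝ) - 1) := by
      ring
    linarith [hring ▸ h]
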